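/- arXiv:1601.06689 — 7 statements merged into one kernel-verified Lean document; each statement's English description precedes it below -/
import Mathlib

section
/- An index coding problem is rate 1/2 feasible (i.e., there exist a finite field F and vectors V_1,…,V_n ∈ F^2 under which all conflicts are resolved) if and only if it has no internal conflicts. -/
/-!
Common definitions: an index coding problem with `n` messages (indexed by `Fin n`),
`T ≥ 1` receivers, demand sets `D j` and side-information sets `S j`.
-/

/-- An index coding problem with `n` messages. -/
structure ICP (n : ℕ) where
  T : ℕ
  hT : 1 ≤ T
  D : Fin T → Finset (Fin n)
  S : Fin T → Finset (Fin n)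
  hDS : ∀ j, Disjoint (D j) (S j)

namespace ICP

variable {n : ℕ}

/-- The interfering set `Interf_k(j)`: all messages other than `k` not in the side
information of receiver `j`, provided `k ∈ D j`; empty otherwise. -/
def Interf (P : ICP n) (k : Fin n) (j : Fin P.T) : Finset (Fin n) :=
  if k ∈ P.D j then Finset.univ \ insert k (P.S j) else ∅

/-- All conflicts are resolved by the assignment `V` of `L`-length vectors over `F`
to the messages: for every message `k` and receiver `j`, `V k` is outside the span of
the vectors assigned to `Interf_k(j)`. -/
def Resolved (P : ICP n) (F : Type) [Field F] {L : ℕ} (V : Fin n → Fin L → F) : Prop :=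
  ∀ (k : Fin n) (j : Fin P.T),
    V k ∉ Submodule.span F (V '' (P.Interf k j : Set (Fin n)))

/-- Rate `1/L` feasibility: there exist a finite field `F` and an assignment of
`L`-length vectors over `F` resolving all conflicts. -/
def RateFeasible (P : ICP n) (L : ℕ) : Prop :=
  ∃ (F : Type) (_ : Field F) (_ : Fintype F) (V : Fin n → Fin L → F),
    P.Resolved F V

/-- Adjacency in the alignment graph: `i ≠ i'` both interfere at a receiver `j`
demanding some message `k ∉ {i, i'}`. -/
def AlignAdj (P : ICP n) (i i' : Fin n) : Prop :=
  i ≠ i' ∧ ∃ (j : Fin P.T) (k : Fin n), k ∈ P.D j ∧ k ≠ i ∧ k ≠ i' ∧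
    i ∈ P.Interf k j ∧ i' ∈ P.Interf k j

/-- The alignment graph. -/
def alignGraph (P : ICP n) : SimpleGraph (Fin n) where
  Adj := P.AlignAdj
  symm := by
    constructor
    rintro a b ⟨hne, j, k, h1, h2, h3, h4, h5⟩
    exact ⟨hne.symm, j, k, h1, h3, h2, h5, h4⟩
  loopless := by constructor; rintro a ⟨hne, -⟩; exact hne rfl

/-- Two messages lie in the same alignment set (connected component of the
alignment graph). -/
def SameAlignSet (P : ICP n) (i i' : Fin n) : Prop :=
  P.alignGraph.Reachable i i'

/-- Messages `i` and `k` are in conflict. -/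
def InConflict (P : ICP n) (i k : Fin n) : Prop :=
  (∃ j, k ∈ P.D j ∧ i ∈ P.Interf k j) ∨ (∃ j, i ∈ P.D j ∧ k ∈ P.Interf i j)

/-- There is an internal conflict: a conflict between two messages lying in the
same alignment set. -/
def HasInternalConflict (P : ICP n) : Prop :=
  ∃ i k, P.InConflict i k ∧ P.SameAlignSet i k

/-- The conflict hypergraph, given as the set of unordered pairs `{{k}, Interf_k(j)}`
over all receivers `j` and all demands `k ∈ D j`. -/
def conflictHypergraph (P : ICP n) : Set (Sym2 (Finset (Fin n))) :=
  {e | ∃ (j : Fin P.T) (k : Fin n), k ∈ P.D j ∧ e = s({k}, P.Interf k j)}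

/-- The problem is groupcast: every message is demanded by at least one receiver. -/
def Groupcast (P : ICP n) : Prop := ∀ k : Fin n, ∃ j, k ∈ P.D j

/-- `i 0, i 1, i 2, i 3` form an acyclic subset of messages of size 4. -/
def AcyclicSubset4 (P : ICP n) (i : Fin 4 → Fin n) : Prop :=
  Function.Injective i ∧
    ∃ j : Fin 4 → Fin P.T, ∀ m : Fin 4, i m ∈ P.D (j m) ∧
      ∀ m' : Fin 4, m' < m → i m' ∈ P.Interf (i m) (j m)

/-- The alignment set (connected component) of the vertex `v` has both a fork
(a vertex of degree at least 3) and a cycle all of whose vertices lie in it. -/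
def HasForkAndCycle (P : ICP n) (v : Fin n) : Prop :=
  (∃ u, P.alignGraph.Reachable v u ∧ 3 ≤ (P.alignGraph.neighborSet u).ncard) ∧
  (∃ (u : Fin n) (c : P.alignGraph.Walk u u), c.IsCycle ∧
      ∀ x ∈ c.support, P.alignGraph.Reachable v x)

/-- A triangular interfering set: a 3-element set of messages simultaneously
interfering at some receiver, at least two of which are in conflict. -/
def TriangularSet (P : ICP n) (W : Finset (Fin n)) : Prop :=
  W.card = 3 ∧ (∃ (j : Fin P.T) (k : Fin n), k ∈ P.D j ∧ W ⊆ P.Interf k j) ∧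
    ∃ i i', i ∈ W ∧ i' ∈ W ∧ i ≠ i' ∧ P.InConflict i i'

/-- Two distinct triangular interfering sets are adjacent: they meet in exactly
two messages which are in conflict. -/
def TriAdj (P : ICP n) (W1 W2 : Finset (Fin n)) : Prop :=
  P.TriangularSet W1 ∧ P.TriangularSet W2 ∧ W1 ≠ W2 ∧
    ∃ i i', i ≠ i' ∧ W1 ∩ W2 = {i, i'} ∧ P.InConflict i i'

/-- Two triangular interfering sets are connected: some finite sequence of
triangular interfering sets, with consecutive members adjacent, joins them. -/
def TriConnected (P : ICP n) (W1 W2 : Finset (Fin n)) : Prop :=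
  P.TriangularSet W1 ∧ P.TriangularSet W2 ∧ Relation.ReflTransGen P.TriAdj W1 W2

/-- `W'` is a type-2 alignment set: the union of a maximal family of pairwise
connected triangular interfering sets. -/
def IsType2AlignSet (P : ICP n) (W' : Finset (Fin n)) : Prop :=
  ∃ 𝒯 : Set (Finset (Fin n)), 𝒯.Nonempty ∧
    (∀ W ∈ 𝒯, P.TriangularSet W) ∧
    (∀ W1 ∈ 𝒯, ∀ W2 ∈ 𝒯, P.TriConnected W1 W2) ∧
    (∀ 𝒯' : Set (Finset (Fin n)), 𝒯 ⊆ 𝒯' → (∀ W ∈ 𝒯', P.TriangularSet W) →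
      (∀ W1 ∈ 𝒯', ∀ W2 ∈ 𝒯', P.TriConnected W1 W2) → 𝒯' = 𝒯) ∧
    (W' : Set (Fin n)) = ⋃ W ∈ 𝒯, (W : Set (Fin n))

/-- The interfering set of message `k` at receiver `j` in the `W'`-restricted
index coding problem (its demand sets are `D j ∩ W'`, side information `S j ∩ W'`,
and message set `W'`). -/
def rInterf (P : ICP n) (W' : Finset (Fin n)) (k : Fin n) (j : Fin P.T) :
    Finset (Fin n) :=
  if k ∈ P.D j ∩ W' then P.Interf k j ∩ W' else ∅

/-- Adjacency in the alignment graph of the `W'`-restricted problem. -/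
def rAlignAdj (P : ICP n) (W' : Finset (Fin n)) (i i' : Fin n) : Prop :=
  i ≠ i' ∧ ∃ (j : Fin P.T) (k : Fin n), k ∈ P.D j ∩ W' ∧ k ≠ i ∧ k ≠ i' ∧
    i ∈ P.rInterf W' k j ∧ i' ∈ P.rInterf W' k j

/-- The alignment graph of the `W'`-restricted problem (messages outside `W'`
are isolated vertices). -/
def rAlignGraph (P : ICP n) (W' : Finset (Fin n)) : SimpleGraph (Fin n) where
  Adj := P.rAlignAdj W'
  symm := by
    constructor
    rintro a b ⟨hne, j, k, h1, h2, h3, h4, h5⟩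
    exact ⟨hne.symm, j, k, h1, h3, h2, h5, h4⟩
  loopless := by constructor; rintro a ⟨hne, -⟩; exact hne rfl

/-- Conflict in the `W'`-restricted problem. -/
def rInConflict (P : ICP n) (W' : Finset (Fin n)) (i k : Fin n) : Prop :=
  (∃ j, k ∈ P.D j ∩ W' ∧ i ∈ P.rInterf W' k j) ∨
  (∃ j, i ∈ P.D j ∩ W' ∧ k ∈ P.rInterf W' i j)

/-- There is a `W'`-restricted internal conflict: a conflict of the restricted
problem between two messages in the same `W'`-restricted alignment set. -/
def HasRestrictedInternalConflict (P : ICP n) (W' : Finset (Fin n)) : Prop :=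
  ∃ i k, i ∈ W' ∧ k ∈ W' ∧ P.rInConflict W' i k ∧ (P.rAlignGraph W').Reachable i k

/-- The `W'`-restricted index coding problem is rate `1/2` feasible: there exist a
finite field `F` and vectors `V i ∈ F²` for `i ∈ W'` such that for every `k ∈ W'`
and every receiver `j`, `V k ∉ span {V i : i ∈ Interf_k(j) ∩ W'}`. -/
def RestrictedRateHalfFeasible (P : ICP n) (W' : Finset (Fin n)) : Prop :=
  ∃ (F : Type) (_ : Field F) (_ : Fintype F) (V : Fin n → Fin 2 → F),
    ∀ k ∈ W', ∀ j : Fin P.T,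
      V k ∉ Submodule.span F (V '' ((P.Interf k j ∩ W') : Set (Fin n)))

end ICP

open Submodule Module SimpleGraph

namespace ICPProofAux

variable {n : ℕ}

lemma resolved_ne_zero (P : ICP n) {F : Type} [Field F] {V : Fin n → Fin 2 → F}
    (h : P.Resolved F V) (m : Fin n) : V m ≠ 0 := by
  intro h0
  exact h m ⟨0, P.hT⟩ (h0 ▸ Submodule.zero_mem _)

lemma mem_interf_ne (P : ICP n) {k i : Fin n} {j : Fin P.T}
    (h : i ∈ P.Interf k j) : i ≠ k := by
  unfold ICP.Interf at h
  by_cases hk : k ∈ P.D j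
  · simp only [hk, if_true, Finset.mem_sdiff, Finset.mem_insert] at h
    intro he; exact h.2 (Or.inl he)
  · simp [hk] at h

lemma span_eq_of_adj (P : ICP n) {F : Type} [Field F] {V : Fin n → Fin 2 → F}
    (hres : P.Resolved F V) {a b : Fin n} (hab : P.alignGraph.Adj a b) :
    Submodule.span F {V a} = Submodule.span F {V b} := by
  obtain ⟨hne, j, k, hkD, hka, hkb, haI, hbI⟩ := hab
  set W := Submodule.span F (V '' ((P.Interf k j : Finset (Fin n)) : Set (Fin n))) with hW
  have hkW : V k ∉ W := hres k j
  have hWt : W ≠ ⊤ := fun h => hkW (h ▸ Submodule.mem_top)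
  have hWr : finrank F W < 2 := by
    have := Submodule.finrank_lt (K := F) (V := Fin 2 → F) hWt
    simpa [Module.finrank_pi] using this
  have key : ∀ c : Fin n, c ∈ P.Interf k j → W = Submodule.span F {V c} := by
    intro c hc
    have hle : Submodule.span F {V c} ≤ W := by
      apply Submodule.span_le.2
      intro x hx
      rcases hx with rfl
      exact Submodule.subset_span ⟨c, Finset.mem_coe.2 hc, rfl⟩
    have h1 : finrank F (Submodule.span F {V c}) = 1 :=
      finrank_span_singleton (resolved_ne_zero P hres c)
    exact (Submodule.eq_of_le_of_finrank_le hle (by omega)).symm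
  rw [← key a haI, ← key b hbI]

lemma span_eq_of_reachable (P : ICP n) {F : Type} [Field F] {V : Fin n → Fin 2 → F}
    (hres : P.Resolved F V) {a b : Fin n} (hab : P.alignGraph.Reachable a b) :
    Submodule.span F {V a} = Submodule.span F {V b} := by
  obtain ⟨w⟩ := hab
  induction w with
  | nil => rfl
  | cons h p ih => exact (span_eq_of_adj P hres h).trans ih

end ICPProofAux
open Submodule Module SimpleGraph in
/-- An index coding problem is rate `1/2` feasible iff it has no
internal conflicts. -/
theorem rateHalf_feasible_iff_no_internal_conflict {n : ℕ} (P : ICP n) :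
    P.RateFeasible 2 ↔ ¬ P.HasInternalConflict := by
  constructor
  · rintro ⟨F, _, _, V, hres⟩ ⟨i, k, hconf, hreach⟩
    have hspan : Submodule.span F {V i} = Submodule.span F {V k} :=
      ICPProofAux.span_eq_of_reachable P hres hreach
    rcases hconf with ⟨j, hkD, hiI⟩ | ⟨j, hiD, hkI⟩
    · apply hres k j
      have h1 : V k ∈ Submodule.span F {V i} :=
        hspan.symm ▸ Submodule.mem_span_singleton_self _
      have h2 : Submodule.span F {V i} ≤
          Submodule.span F (V '' ((P.Interf k j : Finset (Fin n)) : Set (Fin n))) := by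
        apply Submodule.span_le.2
        rintro x rfl
        exact Submodule.subset_span ⟨i, Finset.mem_coe.2 hiI, rfl⟩
      exact h2 h1
    · apply hres i j
      have h1 : V i ∈ Submodule.span F {V k} :=
        hspan ▸ Submodule.mem_span_singleton_self _
      have h2 : Submodule.span F {V k} ≤
          Submodule.span F (V '' ((P.Interf i j : Finset (Fin n)) : Set (Fin n))) := by
        apply Submodule.span_le.2
        rintro x rfl
        exact Submodule.subset_span ⟨k, Finset.mem_coe.2 hkI, rfl⟩
      exact h2 h1
  · intro hno
    obtain ⟨p, hnp, hp⟩ := Nat.exists_infinite_primes n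
    haveI : Fact p.Prime := ⟨hp⟩
    set e : Fin n → ZMod p :=
      fun i => (((P.alignGraph.connectedComponentMk i).out : Fin n) : ℕ) with he
    have hreach_of_e : ∀ a b : Fin n, e a = e b → P.alignGraph.Reachable a b := by
      intro a b hab
      have hva : ((P.alignGraph.connectedComponentMk a).out : Fin n).val < p :=
        lt_of_lt_of_le (Fin.is_lt _) hnp
      have hvb : ((P.alignGraph.connectedComponentMk b).out : Fin n).val < p :=
        lt_of_lt_of_le (Fin.is_lt _) hnp
      have hval := congrArg ZMod.val hab
      rw [he] at hval
      simp only at hval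
      rw [ZMod.val_cast_of_lt hva, ZMod.val_cast_of_lt hvb] at hval
      have hout : (P.alignGraph.connectedComponentMk a).out =
          (P.alignGraph.connectedComponentMk b).out := Fin.ext hval
      have h2 : P.alignGraph.connectedComponentMk a = P.alignGraph.connectedComponentMk b := by
        rw [← (P.alignGraph.connectedComponentMk a).out_eq,
          ← (P.alignGraph.connectedComponentMk b).out_eq, hout]
      exact (SimpleGraph.ConnectedComponent.eq).1 h2
    have he_of_reach : ∀ a b : Fin n, P.alignGraph.Reachable a b → e a = e b := by
      intro a b hab
      have h2 : P.alignGraph.connectedComponentMk a = P.alignGraph.connectedComponentMk b :=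
        SimpleGraph.ConnectedComponent.sound hab
      rw [he]; simp only [h2]
    refine ⟨ZMod p, inferInstance, inferInstance, fun i => ![1, e i], ?_⟩
    intro k j hmem
    by_cases hkD : k ∈ P.D j
    · -- all elements of Interf k j are in one component
      rcases Finset.eq_empty_or_nonempty (P.Interf k j) with hI | ⟨i0, hi0⟩
      · rw [hI] at hmem
        simp only [Finset.coe_empty, Set.image_empty, Submodule.span_empty,
          Submodule.mem_bot] at hmem
        have : (1 : ZMod p) = 0 := congrFun hmem 0
        exact one_ne_zero this
      · have hconst : ∀ i ∈ P.Interf k j, e i = e i0 := by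
          intro i hi
          by_cases hii : i = i0
          · rw [hii]
          · have hik : k ≠ i := (ICPProofAux.mem_interf_ne P hi).symm
            have hik0 : k ≠ i0 := (ICPProofAux.mem_interf_ne P hi0).symm
            have hadj : P.alignGraph.Adj i i0 := ⟨hii, j, k, hkD, hik, hik0, hi, hi0⟩
            exact he_of_reach _ _ hadj.reachable
        have himg : (fun i => ![1, e i]) '' ((P.Interf k j : Finset (Fin n)) : Set (Fin n))
            ⊆ {![1, e i0]} := by
          rintro x ⟨i, hi, rfl⟩
          simp only [Set.mem_singleton_iff]
          rw [hconst i (Finset.mem_coe.1 hi)]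
        have hle := Submodule.span_mono (R := ZMod p) himg
        have hmem2 : ![1, e k] ∈ Submodule.span (ZMod p) {![1, e i0]} := hle hmem
        obtain ⟨c, hc⟩ := Submodule.mem_span_singleton.1 hmem2
        have hc0 : c * 1 = 1 := congrFun hc 0
        have hc1 : c * e i0 = e k := congrFun hc 1
        rw [mul_one] at hc0
        rw [hc0, one_mul] at hc1
        have hreach : P.alignGraph.Reachable i0 k := hreach_of_e _ _ hc1
        exact hno ⟨i0, k, Or.inl ⟨j, hkD, hi0⟩, hreach⟩
    · have hI : P.Interf k j = ∅ := by unfold ICP.Interf; simp [hkD]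
      rw [hI] at hmem
      simp only [Finset.coe_empty, Set.image_empty, Submodule.span_empty,
        Submodule.mem_bot] at hmem
      have : (1 : ZMod p) = 0 := congrFun hmem 0
      exact one_ne_zero this
end

section
/- Suppose an index coding problem has no internal conflicts. Let F be a field, L ≥ 1, and let V_1,…,V_n ∈ F^L be nonzero vectors such that V_i = V_{i'} whenever i and i' lie in the same alignment set, and such that V_i and V_{i'} are linearly independent whenever i and i' lie in distinct alignment sets. Then all conflicts are resolved under this assignment. -/
/-- If there are no internal conflicts, then any assignment of
nonzero vectors which is constant on alignment sets and assigns linearly independent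
vectors to distinct alignment sets resolves all conflicts. -/
theorem no_internal_conflict_assignment_resolved {n : ℕ} (P : ICP n)
    (hnoint : ¬ P.HasInternalConflict)
    (F : Type) [Field F] (L : ℕ) (hL : 1 ≤ L) (V : Fin n → Fin L → F)
    (hnz : ∀ i, V i ≠ 0)
    (heq : ∀ i i', P.SameAlignSet i i' → V i = V i')
    (hind : ∀ i i', ¬ P.SameAlignSet i i' → LinearIndependent F ![V i, V i']) :
    P.Resolved F V := by
  intro k j
  intro hmem
  by_cases hD : k ∈ P.D j
  · -- Interf k j = univ \ insert k (S j)
    rcases (Finset.eq_empty_or_nonempty (P.Interf k j)) with hE | ⟨i0, hi0⟩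
    · rw [hE] at hmem
      simp only [Finset.coe_empty, Set.image_empty, Submodule.span_empty,
        Submodule.mem_bot] at hmem
      exact hnz k hmem
    · -- k ∉ Interf k j
      have hkI : ∀ i ∈ P.Interf k j, k ≠ i := by
        intro i hi h
        subst h
        simp [ICP.Interf, hD] at hi
      -- constant on Interf
      have hconst : ∀ i ∈ P.Interf k j, V i = V i0 := by
        intro i hi
        by_cases hii : i = i0
        · rw [hii]
        · refine heq i i0 (SimpleGraph.Adj.reachable ?_)
          exact ⟨hii, j, k, hD, hkI i hi, hkI i0 hi0, hi, hi0⟩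
      have himg : V '' ((P.Interf k j : Set (Fin n))) = {V i0} := by
        apply Set.eq_singleton_iff_nonempty_unique_mem.mpr
        constructor
        · exact ⟨V i0, ⟨i0, hi0, rfl⟩⟩
        · rintro x ⟨i, hi, rfl⟩
          exact hconst i hi
      rw [himg] at hmem
      -- k and i0 in conflict, not same alignment set
      have hconf : P.InConflict i0 k := Or.inl ⟨j, hD, hi0⟩
      have hnsame : ¬ P.SameAlignSet k i0 := by
        intro h
        exact hnoint ⟨i0, k, hconf, h.symm⟩
      have hli := hind k i0 hnsame
      rw [LinearIndependent.pair_iff] at hli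
      rcases Submodule.mem_span_singleton.mp hmem with ⟨a, ha⟩
      have := hli 1 (-a) (by rw [one_smul, neg_smul, ha]; abel)
      exact one_ne_zero this.1
  · have hE : P.Interf k j = ∅ := by simp [ICP.Interf, hD]
    rw [hE] at hmem
    simp only [Finset.coe_empty, Set.image_empty, Submodule.span_empty,
      Submodule.mem_bot] at hmem
    exact hnz k hmem
end

section
/- Let i_1, i_2, i_3, i_4 be an acyclic subset of messages of size 4 of an index coding problem. Then for any field F, any L ≥ 1, and any vectors V_1,…,V_n ∈ F^L under which all conflicts are resolved, the four vectors V_{i_1}, V_{i_2}, V_{i_3}, V_{i_4} are linearly independent. -/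
/-- If `i` is an acyclic subset of messages of size 4, then under
any conflict-resolving assignment the four corresponding vectors are linearly
independent. -/
theorem acyclic_subset_linearIndependent {n : ℕ} (P : ICP n)
    (i : Fin 4 → Fin n) (hi : P.AcyclicSubset4 i)
    (F : Type) [Field F] (L : ℕ) (hL : 1 ≤ L) (V : Fin n → Fin L → F)
    (hres : P.Resolved F V) :
    LinearIndependent F (fun m : Fin 4 => V (i m)) := by
  classical
  obtain ⟨hinj, j, hj⟩ := hi
  have key : ∀ m : Fin 4, ∀ s : Set (Fin n),
      (∀ a ∈ s, ∃ m' : Fin 4, m' < m ∧ a = i m') →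
      V (i m) ∉ Submodule.span F (V '' s) := by
    intro m s hs hmem
    refine hres (i m) (j m) (Submodule.span_mono (Set.image_mono ?_) hmem)
    intro a ha
    obtain ⟨m', hlt, rfl⟩ := hs a ha
    exact (hj m).2 m' hlt
  have hstep : ∀ (m : Fin 4) (k : ℕ) (e : Fin k → Fin 4), (∀ m', e m' < m) →
      V (i m) ∉ Submodule.span F (Set.range fun m' : Fin k => V (i (e m'))) := by
    intro m k e he hmem
    have hr : (Set.range fun m' : Fin k => V (i (e m'))) =
        V '' (Set.range fun m' => i (e m')) := by
      rw [← Set.range_comp]; rfl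
    rw [hr] at hmem
    refine key m _ ?_ hmem
    rintro a ⟨m', rfl⟩
    exact ⟨e m', he m', rfl⟩
  rw [linearIndependent_fin_succ']
  refine ⟨?_, ?_⟩
  · rw [linearIndependent_fin_succ']
    refine ⟨?_, ?_⟩
    · rw [linearIndependent_fin_succ']
      refine ⟨?_, ?_⟩
      · rw [linearIndependent_fin_succ']
        refine ⟨linearIndependent_empty_type, ?_⟩
        have h0 := key ((Fin.last 0).castSucc.castSucc.castSucc) ∅ (by simp)
        simpa [Fin.init] using h0
      · exact hstep ((Fin.last 1).castSucc.castSucc) 1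
          (fun m' => m'.castSucc.castSucc.castSucc)
          (fun m' => by fin_cases m' <;> decide)
    · exact hstep ((Fin.last 2).castSucc) 2
        (fun m' => m'.castSucc.castSucc)
        (fun m' => by fin_cases m' <;> decide)
  · exact hstep (Fin.last 3) 3 Fin.castSucc (fun m' => m'.castSucc_lt_last)
end

section
/- Let F be any field and let V_1,…,V_n ∈ F^3 be vectors under which all conflicts of an index coding problem are resolved. Then every triangular interfering set W'' of the problem satisfies dim span{V_i : i ∈ W''} = 2. -/
/-- If length-3 vectors `V` resolve all conflicts, then every
triangular interfering set spans a space of dimension exactly 2. -/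
theorem triangularSet_span_two_dim {n : ℕ} (P : ICP n) (F : Type) [Field F]
    (V : Fin n → Fin 3 → F) (hres : P.Resolved F V)
    (W'' : Finset (Fin n)) (hW : P.TriangularSet W'') :
    Module.finrank F (Submodule.span F (V '' (W'' : Set (Fin n)))) = 2 := by
  classical
  obtain ⟨hcard, ⟨j0, k, hk, hsub⟩, i, i', hi, hi', hne, hconf⟩ := hW
  have j1 : Fin P.T := ⟨0, P.hT⟩
  have hnz : ∀ a : Fin n, V a ≠ 0 := by
    intro a ha
    exact hres a j1 (ha ▸ Submodule.zero_mem _)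
  -- upper bound
  have hle : Module.finrank F (Submodule.span F (V '' (W'' : Set (Fin n)))) ≤ 2 := by
    have hlt : Submodule.span F (V '' (W'' : Set (Fin n))) < ⊤ := by
      rw [lt_top_iff_ne_top]
      intro h
      refine hres k j0 (Submodule.span_mono (Set.image_mono ?_)
        (h ▸ Submodule.mem_top))
      exact_mod_cast hsub
    have := Submodule.finrank_lt (K := F) (V := Fin 3 → F) hlt.ne
    rw [Module.finrank_fin_fun] at this
    omega
  -- get a,b ∈ W'' with V b ∉ span {V a}
  obtain ⟨a, b, ha, hb, hab⟩ :
      ∃ a b, a ∈ W'' ∧ b ∈ W'' ∧ V b ∉ Submodule.span F {V a} := by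
    rcases hconf with ⟨j, hD, hI⟩ | ⟨j, hD, hI⟩
    · refine ⟨i, i', hi, hi', fun h => hres i' j (Submodule.span_mono ?_ h)⟩
      rw [Set.singleton_subset_iff]
      exact ⟨i, Finset.mem_coe.2 hI, rfl⟩
    · refine ⟨i', i, hi', hi, fun h => hres i j (Submodule.span_mono ?_ h)⟩
      rw [Set.singleton_subset_iff]
      exact ⟨i', Finset.mem_coe.2 hI, rfl⟩
  -- lower bound
  have hVne : V b ≠ V a := fun h => hab (h ▸ Submodule.subset_span rfl)
  have hind : LinearIndependent F ((↑) : ({V b, V a} : Set (Fin 3 → F)) → (Fin 3 → F)) := by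
    rw [show ({V b, V a} : Set (Fin 3 → F)) = insert (V b) {V a} from rfl]
    show LinearIndepOn F id (insert (V b) {V a})
    rw [linearIndepOn_id_insert (by simpa using hVne)]
    exact ⟨(linearIndepOn_singleton_iff F).2 (hnz a), hab⟩
  have hcard2 : ({V b, V a} : Set (Fin 3 → F)).toFinset.card = 2 := by
    simp [Set.toFinset_insert, hVne]
  have h2 : Module.finrank F (Submodule.span F ({V b, V a} : Set (Fin 3 → F))) = 2 := by
    rw [finrank_span_set_eq_card hind, hcard2]
  have hmono : Submodule.span F ({V b, V a} : Set (Fin 3 → F)) ≤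
      Submodule.span F (V '' (W'' : Set (Fin n))) := by
    apply Submodule.span_mono
    rintro x (rfl | rfl)
    · exact ⟨b, hb, rfl⟩
    · exact ⟨a, ha, rfl⟩
  have := Submodule.finrank_mono hmono
  omega
end

section
/- Let F be any field and let V_1,…,V_n ∈ F^3 be vectors under which all conflicts of an index coding problem are resolved. Then every type-2 alignment set W' of the problem satisfies dim span{V_i : i ∈ W'} = 2; i.e., all messages of a type-2 alignment set are assigned vectors from a vector space of dimension two. -/
section Aux

variable {n : ℕ} {F : Type} [Field F] {V : Fin n → Fin 3 → F} {P : ICP n}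

lemma aux_nonzero (hres : P.Resolved F V) (k : Fin n) : V k ≠ 0 := by
  intro h
  apply hres k ⟨0, P.hT⟩
  rw [h]
  exact Submodule.zero_mem _

lemma aux_two_le (hres : P.Resolved F V) {i i' : Fin n} (hc : P.InConflict i i')
    (p : Submodule F (Fin 3 → F)) (hi : V i ∈ p) (hi' : V i' ∈ p) :
    2 ≤ Module.finrank F p := by
  have key : ∀ a b : Fin n, V a ∈ p → V b ∈ p →
      V b ∉ Submodule.span F {V a} → 2 ≤ Module.finrank F p := by
    intro a b ha hb hab
    by_contra hlt
    push_neg at hlt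
    have h1 : Submodule.span F {V a} ≤ p :=
      (Submodule.span_singleton_le_iff_mem _ _).2 ha
    have hfr : Module.finrank F (Submodule.span F {V a}) = 1 :=
      finrank_span_singleton (aux_nonzero hres a)
    have hp : Submodule.span F {V a} = p :=
      Submodule.eq_of_le_of_finrank_le h1 (by omega)
    exact hab (hp ▸ hb)
  rcases hc with ⟨j, hD, hI⟩ | ⟨j, hD, hI⟩
  · refine key i i' hi hi' fun hmem => ?_
    have hle : Submodule.span F {V i} ≤
        Submodule.span F (V '' ((P.Interf i' j : Finset (Fin n)) : Set (Fin n))) :=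
      (Submodule.span_singleton_le_iff_mem _ _).2 (Submodule.subset_span ⟨i, hI, rfl⟩)
    exact hres i' j (hle hmem)
  · refine key i' i hi' hi fun hmem => ?_
    have hle : Submodule.span F {V i'} ≤
        Submodule.span F (V '' ((P.Interf i j : Finset (Fin n)) : Set (Fin n))) :=
      (Submodule.span_singleton_le_iff_mem _ _).2 (Submodule.subset_span ⟨i', hI, rfl⟩)
    exact hres i j (hle hmem)

lemma aux_le_two (hres : P.Resolved F V) {W : Finset (Fin n)} {j : Fin P.T} {k : Fin n}
    (hsub : W ⊆ P.Interf k j) :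
    Module.finrank F (Submodule.span F (V '' (W : Set (Fin n)))) ≤ 2 := by
  by_contra h
  push_neg at h
  have hle : Submodule.span F (V '' (W : Set (Fin n))) ≤
      Submodule.span F (V '' ((P.Interf k j : Finset (Fin n)) : Set (Fin n))) :=
    Submodule.span_mono (Set.image_mono (by exact_mod_cast hsub))
  have hamb : Module.finrank F (Fin 3 → F) = 3 := Module.finrank_fin_fun F
  have hle3 := Submodule.finrank_le (Submodule.span F (V '' (W : Set (Fin n))))
  rw [hamb] at hle3
  have h3 : Module.finrank F (Submodule.span F (V '' (W : Set (Fin n)))) = 3 := by omega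
  have htop : Submodule.span F (V '' (W : Set (Fin n))) = ⊤ :=
    Submodule.eq_top_of_finrank_eq (by rw [h3, hamb])
  exact hres k j (hle (htop ▸ Submodule.mem_top))

lemma aux_tri_span (hres : P.Resolved F V) {W : Finset (Fin n)} (ht : P.TriangularSet W)
    {i i' : Fin n} (hi : i ∈ W) (hi' : i' ∈ W) (hc : P.InConflict i i') :
    Submodule.span F ({V i, V i'} : Set (Fin 3 → F)) =
      Submodule.span F (V '' (W : Set (Fin n))) := by
  obtain ⟨hcard, ⟨j, k, hk, hsub⟩, -⟩ := ht
  have hq : Submodule.span F ({V i, V i'} : Set (Fin 3 → F)) ≤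
      Submodule.span F (V '' (W : Set (Fin n))) := by
    apply Submodule.span_le.2
    rintro x (rfl | rfl)
    · exact Submodule.subset_span ⟨i, hi, rfl⟩
    · exact Submodule.subset_span ⟨i', hi', rfl⟩
  refine Submodule.eq_of_le_of_finrank_le hq ?_
  have h2 : 2 ≤ Module.finrank F (Submodule.span F ({V i, V i'} : Set (Fin 3 → F))) :=
    aux_two_le hres hc _ (Submodule.subset_span (by simp))
      (Submodule.subset_span (by simp))
  have hle2 := aux_le_two hres hsub
  omega

lemma aux_adj_span_eq (hres : P.Resolved F V) {W1 W2 : Finset (Fin n)}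
    (h : P.TriAdj W1 W2) :
    Submodule.span F (V '' (W1 : Set (Fin n))) =
      Submodule.span F (V '' (W2 : Set (Fin n))) := by
  obtain ⟨ht1, ht2, -, i, i', hii, hcap, hconf⟩ := h
  have hi1 : i ∈ W1 ∧ i ∈ W2 := by
    have : i ∈ W1 ∩ W2 := by rw [hcap]; simp
    exact ⟨(Finset.mem_inter.1 this).1, (Finset.mem_inter.1 this).2⟩
  have hi2 : i' ∈ W1 ∧ i' ∈ W2 := by
    have : i' ∈ W1 ∩ W2 := by rw [hcap]; simp
    exact ⟨(Finset.mem_inter.1 this).1, (Finset.mem_inter.1 this).2⟩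
  rw [← aux_tri_span hres ht1 hi1.1 hi2.1 hconf,
    ← aux_tri_span hres ht2 hi1.2 hi2.2 hconf]

end Aux

/-- If length-3 vectors `V` resolve all conflicts, then every
type-2 alignment set spans a space of dimension exactly 2. -/
theorem type2AlignSet_span_two_dim {n : ℕ} (P : ICP n) (F : Type) [Field F]
    (V : Fin n → Fin 3 → F) (hres : P.Resolved F V)
    (W' : Finset (Fin n)) (hW : P.IsType2AlignSet W') :
    Module.finrank F (Submodule.span F (V '' (W' : Set (Fin n)))) = 2 := by
  classical
  obtain ⟨T, ⟨W0, hW0⟩, htri, hconn, -, hunion⟩ := hW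
  -- every member of the family has the same span as W0
  have hsame' : ∀ W, Relation.ReflTransGen P.TriAdj W0 W →
      Submodule.span F (V '' (W0 : Set (Fin n))) =
        Submodule.span F (V '' (W : Set (Fin n))) := by
    intro W hrt
    induction hrt with
    | refl => rfl
    | tail _ hadj ih => exact ih.trans (aux_adj_span_eq hres hadj)
  have hsame : ∀ W ∈ T, Submodule.span F (V '' (W0 : Set (Fin n))) =
      Submodule.span F (V '' (W : Set (Fin n))) := by
    intro W hWmem
    exact hsame' W (hconn W0 hW0 W hWmem).2.2
  have hspan : Submodule.span F (V '' (W' : Set (Fin n))) =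
      Submodule.span F (V '' (W0 : Set (Fin n))) := by
    apply le_antisymm
    · apply Submodule.span_le.2
      rintro x ⟨a, ha, rfl⟩
      rw [hunion] at ha
      simp only [Set.mem_iUnion] at ha
      obtain ⟨W, hWmem, haW⟩ := ha
      rw [hsame W hWmem]
      exact Submodule.subset_span ⟨a, haW, rfl⟩
    · apply Submodule.span_mono
      apply Set.image_mono
      rw [hunion]
      exact Set.subset_iUnion₂ (s := fun W (_ : W ∈ T) => (W : Set (Fin n))) W0 hW0
  rw [hspan]
  obtain ⟨hcard, ⟨j, k, hk, hsub⟩, i, i', hi, hi', hne, hconf⟩ := htri W0 hW0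
  have h2 : 2 ≤ Module.finrank F (Submodule.span F (V '' (W0 : Set (Fin n)))) :=
    aux_two_le hres hconf _ (Submodule.subset_span ⟨i, hi, rfl⟩)
      (Submodule.subset_span ⟨i', hi', rfl⟩)
  have hle := aux_le_two hres hsub
  omega
end

section
/- Let W' be a type-2 alignment set of an index coding problem I. If I is rate 1/3 feasible (i.e., there exist a field F and vectors V_1,…,V_n ∈ F^3 under which all conflicts are resolved), then the W'-restricted index coding problem I_{W'} is rate 1/2 feasible, and consequently there are no W'-restricted internal conflicts. -/
section Aux

open Module Submodule
open scoped Classical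

private theorem finrank_span_pair_aux {F V : Type} [Field F] [AddCommGroup V] [Module F V]
    {x y : V} (hx : x ≠ 0) (hy : ∀ a : F, a • x ≠ y) :
    Module.finrank F (Submodule.span F ({x, y} : Set V)) = 2 := by
  have hli : LinearIndependent F ![y, x] := by
    rw [linearIndependent_fin2]
    exact ⟨hx, by simpa using hy⟩
  have := finrank_span_eq_card hli
  rw [show Set.range ![y, x] = {x, y} by
    simp [Matrix.range_cons, Matrix.range_empty, Set.pair_comm]] at this
  simpa using this

private noncomputable def repFun {n : ℕ} (F : Type) [Field F] (V : Fin n → Fin 3 → F)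
    (i : Fin n) : Fin n :=
  (Finset.univ.filter (fun i' => Submodule.span F {V i'} = Submodule.span F {V i})).min'
    ⟨i, by simp⟩

private theorem repFun_span {n : ℕ} (F : Type) [Field F] (V : Fin n → Fin 3 → F) (i : Fin n) :
    Submodule.span F {V (repFun F V i)} = Submodule.span F {V i} := by
  have := Finset.min'_mem
    (Finset.univ.filter (fun i' => Submodule.span F {V i'} = Submodule.span F {V i}))
    ⟨i, by simp⟩
  simpa [repFun] using this

private theorem repFun_eq_iff {n : ℕ} (F : Type) [Field F] (V : Fin n → Fin 3 → F)
    (i i' : Fin n) :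
    repFun F V i = repFun F V i' ↔
      Submodule.span F {V i} = Submodule.span F {V i'} := by
  constructor
  · intro h
    have h1 := repFun_span F V i
    have h2 := repFun_span F V i'
    rw [h] at h1
    exact h1.symm.trans h2
  · intro h
    have hEq : (Finset.univ.filter (fun x => Submodule.span F {V x} = Submodule.span F {V i}))
        = (Finset.univ.filter (fun x => Submodule.span F {V x} = Submodule.span F {V i'})) := by
      ext x; simp [h]
    simp only [repFun]
    congr 1

end Aux



/-- If `W'` is a type-2 alignment set of a rate `1/3` feasible
index coding problem, then the `W'`-restricted problem is rate `1/2` feasible, and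
consequently there are no `W'`-restricted internal conflicts. -/
theorem type2AlignSet_restricted_rateHalf {n : ℕ} (P : ICP n)
    (W' : Finset (Fin n)) (hW' : P.IsType2AlignSet W')
    (h : ∃ (F : Type) (_ : Field F) (V : Fin n → Fin 3 → F), P.Resolved F V) :
    P.RestrictedRateHalfFeasible W' ∧ ¬ P.HasRestrictedInternalConflict W' := by
  classical
  obtain ⟨F, _, V, hV⟩ := h
  have hV' : ∀ (k : Fin n) (j : Fin P.T) (s : Set (Fin n)),
      s ⊆ (P.Interf k j : Set (Fin n)) → V k ∉ Submodule.span F (V '' s) := by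
    intro k j s hs hmem
    exact hV k j (Submodule.span_mono (Set.image_mono (f := V) hs) hmem)
  have hne0 : ∀ k, V k ≠ 0 := by
    intro k hk
    exact hV k ⟨0, P.hT⟩ (hk ▸ Submodule.zero_mem _)
  obtain ⟨𝒯, ⟨W0, hW0⟩, h𝒯tri, h𝒯conn, -, hUnion⟩ := hW'
  have hfr3 : Module.finrank F (Fin 3 → F) = 3 := by
    simp [Module.finrank_fin_fun]
  have htri_rank : ∀ W : Finset (Fin n), P.TriangularSet W →
      Module.finrank F (Submodule.span F (V '' (W : Set (Fin n)))) ≤ 2 := by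
    intro W hW
    obtain ⟨-, ⟨j, k, hkD, hsub⟩, -⟩ := hW
    have hk : V k ∉ Submodule.span F (V '' (W : Set (Fin n))) :=
      hV' k j _ (Finset.coe_subset.mpr hsub)
    have hnet : Submodule.span F (V '' (W : Set (Fin n))) ≠ ⊤ := by
      intro htop; exact hk (htop ▸ Submodule.mem_top)
    have := Submodule.finrank_lt (K := F) (V := Fin 3 → F) hnet
    rw [hfr3] at this
    omega
  have hconf : ∀ i i', P.InConflict i i' →
      Module.finrank F (Submodule.span F ({V i, V i'} : Set (Fin 3 → F))) = 2 := by
    intro i i' hc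
    rcases hc with ⟨j, hD, hI⟩ | ⟨j, hD, hI⟩
    · have hnotin : V i' ∉ Submodule.span F {V i} := by
        have := hV' i' j {i} (Set.singleton_subset_iff.mpr (Finset.mem_coe.mpr hI))
        simpa using this
      exact finrank_span_pair_aux (hne0 i)
        (fun a ha => hnotin (Submodule.mem_span_singleton.mpr ⟨a, ha⟩))
    · have hnotin : V i ∉ Submodule.span F {V i'} := by
        have := hV' i j {i'} (Set.singleton_subset_iff.mpr (Finset.mem_coe.mpr hI))
        simpa using this
      rw [Set.pair_comm]
      exact finrank_span_pair_aux (hne0 i')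
        (fun a ha => hnotin (Submodule.mem_span_singleton.mpr ⟨a, ha⟩))
  have hadj : ∀ W1 W2, P.TriAdj W1 W2 →
      Submodule.span F (V '' (W1 : Set (Fin n))) = Submodule.span F (V '' (W2 : Set (Fin n))) := by
    rintro W1 W2 ⟨hT1, hT2, -, i, i', hii, hinter, hc⟩
    have hi12 : i ∈ W1 ∩ W2 := by rw [hinter]; exact Finset.mem_insert_self _ _
    have hi'12 : i' ∈ W1 ∩ W2 := by
      rw [hinter]; exact Finset.mem_insert_of_mem (Finset.mem_singleton_self i')
    have key : ∀ W, P.TriangularSet W → i ∈ W → i' ∈ W →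
        Submodule.span F ({V i, V i'} : Set (Fin 3 → F)) = Submodule.span F (V '' (W : Set (Fin n))) := by
      intro W hTW hiW hi'W
      apply Submodule.eq_of_le_of_finrank_le
      · apply Submodule.span_le.mpr
        rintro v (rfl | rfl)
        · exact Submodule.subset_span (Set.mem_image_of_mem V (Finset.mem_coe.mpr hiW))
        · exact Submodule.subset_span (Set.mem_image_of_mem V (Finset.mem_coe.mpr hi'W))
      · rw [hconf i i' hc]
        exact htri_rank W hTW
    exact (key W1 hT1 (Finset.mem_inter.mp hi12).1 (Finset.mem_inter.mp hi'12).1).symm.trans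
      (key W2 hT2 (Finset.mem_inter.mp hi12).2 (Finset.mem_inter.mp hi'12).2)
  have hchain : ∀ W1 W2 : Finset (Fin n), Relation.ReflTransGen P.TriAdj W1 W2 →
      Submodule.span F (V '' (W1 : Set (Fin n))) = Submodule.span F (V '' (W2 : Set (Fin n))) := by
    intro W1 W2 hrtg
    induction hrtg with
    | refl => rfl
    | tail _ hstep ih => exact ih.trans (hadj _ _ hstep)
  have hmemU : ∀ i ∈ W', V i ∈ Submodule.span F (V '' (W0 : Set (Fin n))) := by
    intro i hi
    have hmem : (i : Fin n) ∈ ⋃ W ∈ 𝒯, (W : Set (Fin n)) := by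
      rw [← hUnion]; exact Finset.mem_coe.mpr hi
    obtain ⟨W, hW, hiW⟩ := Set.mem_iUnion₂.mp hmem
    have := hchain W0 W (h𝒯conn W0 hW0 W hW).2.2
    rw [this]
    exact Submodule.subset_span (Set.mem_image_of_mem V hiW)
  have hB : ∀ k ∈ W', ∀ (j : Fin P.T) (i i' : Fin n), i ∈ P.Interf k j → i' ∈ P.Interf k j →
      i ∈ W' → i' ∈ W' → Submodule.span F {V i} = Submodule.span F {V i'} := by
    intro k hk j i i' hiI hi'I hiW hi'W
    by_cases hii : V i' ∈ Submodule.span F {V i}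
    · have hle : Submodule.span F {V i'} ≤ Submodule.span F {V i} :=
        Submodule.span_le.mpr (Set.singleton_subset_iff.mpr hii)
      exact (Submodule.eq_of_le_of_finrank_le hle
        (by simp [finrank_span_singleton (hne0 i), finrank_span_singleton (hne0 i')])).symm
    · exfalso
      have hpair : Submodule.span F ({V i, V i'} : Set (Fin 3 → F))
          = Submodule.span F (V '' (W0 : Set (Fin n))) := by
        apply Submodule.eq_of_le_of_finrank_le
        · apply Submodule.span_le.mpr
          rintro v (rfl | rfl)
          · exact hmemU i hiW
          · exact hmemU i' hi'W
        · rw [finrank_span_pair_aux (hne0 i)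
            (fun a ha => hii (Submodule.mem_span_singleton.mpr ⟨a, ha⟩))]
          exact htri_rank W0 (h𝒯tri W0 hW0)
      have hVk : V k ∉ Submodule.span F ({V i, V i'} : Set (Fin 3 → F)) := by
        have hsub : ({i, i'} : Set (Fin n)) ⊆ (P.Interf k j : Set (Fin n)) := by
          rintro x (rfl | rfl)
          · exact Finset.mem_coe.mpr hiI
          · exact Finset.mem_coe.mpr hi'I
        have := hV' k j {i, i'} hsub
        simpa [Set.image_pair] using this
      exact hVk (hpair ▸ hmemU k hk)
  obtain ⟨p, hnp, hpp⟩ := Nat.exists_infinite_primes (n + 1)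
  haveI : Fact p.Prime := ⟨hpp⟩
  set g : Fin n → Fin n := repFun F V with hg
  set V2 : Fin n → Fin 2 → ZMod p := fun i => ![1, ((g i : ℕ) : ZMod p)] with hV2
  have hcast : ∀ i i' : Fin n, ((g i : ℕ) : ZMod p) = ((g i' : ℕ) : ZMod p) → g i = g i' := by
    intro i i' hcc
    have h1 : ((g i : ℕ) : ZMod p).val = (g i : ℕ) :=
      ZMod.val_natCast_of_lt (lt_of_lt_of_le (g i).isLt (by omega))
    have h2 : ((g i' : ℕ) : ZMod p).val = (g i' : ℕ) :=
      ZMod.val_natCast_of_lt (lt_of_lt_of_le (g i').isLt (by omega))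
    exact Fin.ext (by rw [← h1, ← h2, hcc])
  have hfeas : ∀ k ∈ W', ∀ j : Fin P.T,
      V2 k ∉ Submodule.span (ZMod p) (V2 '' ((P.Interf k j ∩ W') : Set (Fin n))) := by
    intro k hk j hmem
    rcases (P.Interf k j ∩ W').eq_empty_or_nonempty with hemp | ⟨i0, hi0⟩
    · rw [← Finset.coe_inter, hemp] at hmem
      simp only [Finset.coe_empty, Set.image_empty, Submodule.span_empty,
        Submodule.mem_bot] at hmem
      have := congrFun hmem 0
      simp [hV2] at this
    · have hi0I : i0 ∈ P.Interf k j := (Finset.mem_inter.mp hi0).1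
      have hi0W : i0 ∈ W' := (Finset.mem_inter.mp hi0).2
      have himg : V2 '' ((P.Interf k j ∩ W') : Set (Fin n)) = {V2 i0} := by
        apply Set.Subset.antisymm
        · rintro v ⟨i, hiS, rfl⟩
          have hspan := hB k hk j i i0 (Finset.mem_coe.mp hiS.1) hi0I
            (Finset.mem_coe.mp hiS.2) hi0W
          have hgi : g i = g i0 := (repFun_eq_iff F V i i0).mpr hspan
          simp [hV2, hgi]
        · rintro v rfl
          exact ⟨i0, ⟨Finset.mem_coe.mpr hi0I, Finset.mem_coe.mpr hi0W⟩, rfl⟩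
      rw [himg, Submodule.mem_span_singleton] at hmem
      obtain ⟨a, ha⟩ := hmem
      have h0 := congrFun ha 0
      have h1 := congrFun ha 1
      simp [hV2] at h0 h1
      rw [h0] at h1
      simp at h1
      have hgg : g k = g i0 := hcast _ _ h1.symm
      have hspan := (repFun_eq_iff F V k i0).mp hgg
      have hin : V k ∈ Submodule.span F {V i0} := by
        rw [← hspan]; exact Submodule.mem_span_singleton_self (V k)
      have hnotin := hV' k j {i0} (Set.singleton_subset_iff.mpr (Finset.mem_coe.mpr hi0I))
      rw [Set.image_singleton] at hnotin
      exact hnotin hin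
  refine ⟨⟨ZMod p, inferInstance, inferInstance, V2, hfeas⟩, ?_⟩
  rintro ⟨i, k, hiW, hkW, hconfl, hreach⟩
  have hedge : ∀ a b : Fin n, P.rAlignAdj W' a b →
      Submodule.span F {V a} = Submodule.span F {V b} := by
    rintro a b ⟨-, j, k', hk'm, -, -, ha, hb⟩
    simp only [ICP.rInterf, if_pos hk'm] at ha hb
    exact hB k' (Finset.mem_inter.mp hk'm).2 j a b (Finset.mem_inter.mp ha).1
      (Finset.mem_inter.mp hb).1 (Finset.mem_inter.mp ha).2 (Finset.mem_inter.mp hb).2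
  have hwalk : ∀ (a b : Fin n) (w : (P.rAlignGraph W').Walk a b),
      Submodule.span F {V a} = Submodule.span F {V b} := by
    intro a b w
    induction w with
    | nil => rfl
    | cons hstep _ ih => exact (hedge _ _ hstep).trans ih
  obtain ⟨w⟩ := hreach
  have hik := hwalk i k w
  rcases hconfl with ⟨j, hkD, hiI⟩ | ⟨j, hiD, hkI⟩
  · simp only [ICP.rInterf, if_pos hkD] at hiI
    have hnotin := hV' k j {i}
      (Set.singleton_subset_iff.mpr (Finset.mem_coe.mpr (Finset.mem_inter.mp hiI).1))
    rw [Set.image_singleton] at hnotin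
    exact hnotin (by rw [hik]; exact Submodule.mem_span_singleton_self (V k))
  · simp only [ICP.rInterf, if_pos hiD] at hkI
    have hnotin := hV' i j {k}
      (Set.singleton_subset_iff.mpr (Finset.mem_coe.mpr (Finset.mem_inter.mp hkI).1))
    rw [Set.image_singleton] at hnotin
    exact hnotin (by rw [← hik]; exact Submodule.mem_span_singleton_self (V i))
end

section
/- Let A be an alignment set of an index coding problem containing three messages i_1, i_2, i_3 that all belong to Interf_k(j) for a common receiver j and a common message k ∈ D(j). If A contains at least one message other than i_1, i_2, i_3, then the alignment graph has a vertex of A of degree at least 3 (a fork) and also a cycle all of whose vertices lie in A; i.e., A has both forks and cycles. -/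
private lemma icp_adj_of_interf {n : ℕ} (P : ICP n) {j : Fin P.T} {k a b : Fin n}
    (hk : k ∈ P.D j) (hab : a ≠ b) (ha : a ∈ P.Interf k j) (hb : b ∈ P.Interf k j) :
    P.alignGraph.Adj a b := by
  have hka : k ≠ a := by
    simp only [ICP.Interf, hk, if_pos, Finset.mem_sdiff, Finset.mem_insert] at ha
    tauto
  have hkb : k ≠ b := by
    simp only [ICP.Interf, hk, if_pos, Finset.mem_sdiff, Finset.mem_insert] at hb
    tauto
  exact ⟨hab, j, k, hk, hka, hkb, ha, hb⟩

private lemma icp_exists_boundary {V : Type*} {G : SimpleGraph V} {T : Set V} :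
    ∀ {a b : V}, G.Walk a b → a ∉ T → b ∈ T →
      ∃ w x, w ∉ T ∧ x ∈ T ∧ G.Adj w x := by
  intro a b p
  induction p with
  | nil => intro ha hb; exact absurd hb ha
  | @cons a c b h q ih =>
    intro ha hb
    by_cases hc : c ∈ T
    · exact ⟨a, c, ha, hc, h⟩
    · exact ih hc hb

/-- If an alignment set (the component of `v`) contains three
distinct messages interfering at a common receiver demanding a common message, and
the alignment set contains at least one further message, then it has both forks and
cycles. -/
theorem fork_and_cycle_of_three_interfering {n : ℕ} (P : ICP n) (v : Fin n)
    (j : Fin P.T) (k : Fin n) (hk : k ∈ P.D j) (i₁ i₂ i₃ : Fin n)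
    (h12 : i₁ ≠ i₂) (h13 : i₁ ≠ i₃) (h23 : i₂ ≠ i₃)
    (hi₁ : i₁ ∈ P.Interf k j) (hi₂ : i₂ ∈ P.Interf k j) (hi₃ : i₃ ∈ P.Interf k j)
    (hr₁ : P.alignGraph.Reachable v i₁) (hr₂ : P.alignGraph.Reachable v i₂)
    (hr₃ : P.alignGraph.Reachable v i₃)
    (hextra : ∃ u, P.alignGraph.Reachable v u ∧ u ≠ i₁ ∧ u ≠ i₂ ∧ u ≠ i₃) :
    P.HasForkAndCycle v := by
  have a12 : P.alignGraph.Adj i₁ i₂ := icp_adj_of_interf P hk h12 hi₁ hi₂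
  have a13 : P.alignGraph.Adj i₁ i₃ := icp_adj_of_interf P hk h13 hi₁ hi₃
  have a23 : P.alignGraph.Adj i₂ i₃ := icp_adj_of_interf P hk h23 hi₂ hi₃
  obtain ⟨u, hru, hu1, hu2, hu3⟩ := hextra
  -- boundary edge from u into the triangle
  have huT : u ∉ ({i₁, i₂, i₃} : Set (Fin n)) := by
    simp [hu1, hu2, hu3]
  obtain ⟨p⟩ := hru.symm.trans hr₁
  obtain ⟨w, x, hwT, hxT, hwx⟩ :=
    icp_exists_boundary (T := ({i₁, i₂, i₃} : Set (Fin n))) p huT (by simp)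
  constructor
  · -- fork
    refine ⟨x, ?_, ?_⟩
    · rcases hxT with rfl | rfl | rfl
      · exact hr₁
      · exact hr₂
      · exact hr₃
    · -- x has neighbors: the other two triangle vertices and w
      obtain ⟨y, z, hyT, hzT, hyz, hxy, hxz⟩ : ∃ y z,
          y ∈ ({i₁, i₂, i₃} : Set (Fin n)) ∧ z ∈ ({i₁, i₂, i₃} : Set (Fin n)) ∧
          y ≠ z ∧ P.alignGraph.Adj x y ∧ P.alignGraph.Adj x z := by
        rcases hxT with rfl | rfl | rfl
        · exact ⟨i₂, i₃, by simp, by simp, h23, a12, a13⟩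
        · exact ⟨i₁, i₃, by simp, by simp, h13, a12.symm, a23⟩
        · exact ⟨i₁, i₂, by simp, by simp, h12, a13.symm, a23.symm⟩
      have hwy : w ≠ y := fun h => hwT (h ▸ hyT)
      have hwz : w ≠ z := fun h => hwT (h ▸ hzT)
      have hsub : ({y, z, w} : Set (Fin n)) ⊆ P.alignGraph.neighborSet x := by
        rintro t (rfl | rfl | rfl)
        · exact hxy
        · exact hxz
        · exact hwx.symm
      calc (3 : ℕ) = ({y, z, w} : Set (Fin n)).ncard := by
            rw [eq_comm, Set.ncard_eq_three]
            exact ⟨y, z, w, hyz, hwy.symm, hwz.symm, rfl⟩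
        _ ≤ (P.alignGraph.neighborSet x).ncard :=
            Set.ncard_le_ncard hsub (Set.toFinite _)
  · -- cycle: the triangle
    refine ⟨i₁, SimpleGraph.Walk.cons a12 (SimpleGraph.Walk.cons a23 (SimpleGraph.Walk.cons a13.symm SimpleGraph.Walk.nil)), ?_, ?_⟩
    · rw [SimpleGraph.Walk.cons_isCycle_iff]
      constructor
      · apply SimpleGraph.Walk.IsPath.cons
        · apply SimpleGraph.Walk.IsPath.cons
          · simp
          · simp [h13, Ne.symm h13]
        · simp [h12, h23, Ne.symm h12, Ne.symm h23]
      · simp only [SimpleGraph.Walk.edges_cons, SimpleGraph.Walk.edges_nil,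
          List.mem_cons, List.not_mem_nil, or_false]
        rintro (h | h) <;> simp_all [Sym2.eq_iff]
    · intro t ht
      simp only [SimpleGraph.Walk.support_cons, SimpleGraph.Walk.support_nil,
        List.mem_cons, List.not_mem_nil, or_false] at ht
      rcases ht with rfl | rfl | rfl | rfl
      · exact hr₁
      · exact hr₂
      · exact hr₃
      · exact hr₁
end
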